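/- Key Lemma 1 (unilateral version): If (α_n, β_n)_{n≥0} is a Bailey pair relative to a, i.e., β_n = Σ_{j=0}^{n} α_j / ((q;q)_{n-j} (aq;q)_{n+j}) for all n ≥ 0, then (α'_n, β'_n) is a Bailey pair relative to a/q, where α'_0 = α_0, α'_n = (1-a)( α_n/(1 - a q^{2n}) - a q^{2n-2} α_{n-1}/(1 - a q^{2n-2}) ) for n ≥ 1, and β'_n = β_n. That is, β'_n = Σ_{j=0}^{n} α'_j / ((q;q)_{n-j} (a;q)_{n+j}) for all n ≥ 0. -/

import Mathlib

/-- The q-Pochhammer symbol `(x;q)_k = ∏_{i=0}^{k-1} (1 - x q^i)`. -/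
noncomputable def qp (q x : ℂ) (k : ℕ) : ℂ := ∏ i ∈ Finset.range k, (1 - x * q ^ i)

lemma qp_succ (q x : ℂ) (k : ℕ) : qp q x (k + 1) = qp q x k * (1 - x * q ^ k) :=
  Finset.prod_range_succ _ _

lemma qp_succ' (q a : ℂ) (k : ℕ) : qp q a (k + 1) = (1 - a) * qp q (a * q) k := by
  rw [qp, Finset.prod_range_succ']
  simp only [pow_zero, mul_one]
  rw [mul_comm, qp]
  congr 1
  refine Finset.prod_congr rfl fun i _ => ?_
  ring

/-- Abstract algebraic step for the middle terms. -/
lemma aux_step (e A c x y d X Y : ℂ) (he : e ≠ 0) (hx : x ≠ 0) (hy : y ≠ 0)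
    (hd : d ≠ 0) (hX : X ≠ 0) (hY : Y ≠ 0) (hrel : y = d + c * x) :
    e * A / d / (X * x * Y) = A / (X * x * (Y * y / e)) + c * (e * A / d) / (X * (Y * y)) := by
  rw [div_div, div_add_div _ _
      (by simp [hX, hx, hY, hy, he, div_ne_zero] : X * x * (Y * y / e) ≠ 0)
      (by simp [hX, hY, hy] : X * (Y * y) ≠ 0),
    div_eq_div_iff (by simp [hd, hX, hx, hY] : d * (X * x * Y) ≠ 0)
      (by simp [hX, hx, hY, hy, he, div_ne_zero] : X * x * (Y * y / e) * (X * (Y * y)) ≠ 0)]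
  field_simp
  linear_combination A * hrel

/-- Abstract algebraic step for the last term. -/
lemma aux_last (e A d Y : ℂ) (he : e ≠ 0) (hd : d ≠ 0) (hY : Y ≠ 0) :
    e * A / d / (1 * Y) = A / (1 * (Y * d / e)) := by
  field_simp

set_option maxHeartbeats 1000000 in
/-- Key Lemma 1 (unilateral): if `(α, β)` is a Bailey pair relative to `a`, then
`(α', β')` with `α'_0 = α_0`, `α'_n = (1-a)(α_n/(1-aq^{2n}) - a q^{2n-2} α_{n-1}/(1-aq^{2n-2}))`
and `β'_n = β_n` is a Bailey pair relative to `a/q`. -/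
theorem key_lemma_one (q a : ℂ) (α β α' β' : ℕ → ℂ)
    (hqq : ∀ k, qp q q k ≠ 0) (ha : ∀ k, qp q a k ≠ 0) (haq : ∀ k, qp q (a * q) k ≠ 0)
    (hden : ∀ n : ℕ, 1 - a * q ^ (2 * n) ≠ 0)
    (hB : ∀ n, β n = ∑ j ∈ Finset.range (n + 1),
        α j / (qp q q (n - j) * qp q (a * q) (n + j)))
    (hα'0 : α' 0 = α 0)
    (hα' : ∀ n : ℕ, α' (n + 1) = (1 - a) *
        (α (n + 1) / (1 - a * q ^ (2 * (n + 1)))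
          - a * q ^ (2 * n) * α n / (1 - a * q ^ (2 * n))))
    (hβ' : ∀ n, β' n = β n) :
    ∀ n, β' n = ∑ j ∈ Finset.range (n + 1),
        α' j / (qp q q (n - j) * qp q a (n + j)) := by
  have haf : ∀ m : ℕ, (1 - a * q ^ m) ≠ 0 := by
    intro m
    have h := ha (m + 1)
    rw [qp_succ] at h
    exact right_ne_zero_of_mul h
  have hqf : ∀ m : ℕ, (1 - q * q ^ m) ≠ 0 := by
    intro m
    have h := hqq (m + 1)
    rw [qp_succ] at h
    exact right_ne_zero_of_mul h
  have ha1 : (1 : ℂ) - a ≠ 0 := by simpa using haf 0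
  -- relation between (a;q) and (aq;q)
  have hZ : ∀ k : ℕ, qp q (a * q) k = qp q a k * (1 - a * q ^ k) / (1 - a) := by
    intro k
    have h1 := qp_succ q a k
    have h2 := qp_succ' q a k
    rw [eq_div_iff ha1]
    linear_combination h1 - h2
  set t : ℕ → ℂ := fun j => (1 - a) * α j / (1 - a * q ^ (2 * j)) with ht
  intro n
  rw [hβ' n, hB n]
  -- pointwise key identity for j < n
  have key : ∀ j ∈ Finset.range n, t j / (qp q q (n - j) * qp q a (n + j))
      = α j / (qp q q (n - j) * qp q (a * q) (n + j))
        + a * q ^ (2 * j) * t j / (qp q q (n - (j + 1)) * qp q a (n + (j + 1))) := by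
    intro j hj
    rw [Finset.mem_range] at hj
    obtain ⟨m, hm⟩ : ∃ m, n = j + m + 1 := ⟨n - j - 1, by omega⟩
    subst hm
    have e1 : (j + m + 1) - j = m + 1 := by omega
    have e2 : (j + m + 1) - (j + 1) = m := by omega
    have e3 : (j + m + 1) + j = 2 * j + m + 1 := by omega
    have e4 : (j + m + 1) + (j + 1) = (2 * j + m + 1) + 1 := by omega
    rw [e1, e2, e3, e4, qp_succ q q m, qp_succ q a (2 * j + m + 1),
      hZ (2 * j + m + 1)]
    simp only [ht]
    have hrel : (1 : ℂ) - a * q ^ (2 * j + m + 1)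
        = (1 - a * q ^ (2 * j)) + (a * q ^ (2 * j)) * (1 - q * q ^ m) := by ring
    have h := aux_step (1 - a) (α j) (a * q ^ (2 * j)) (1 - q * q ^ m)
      (1 - a * q ^ (2 * j + m + 1)) (1 - a * q ^ (2 * j)) (qp q q m)
      (qp q a (2 * j + m + 1)) ha1 (hqf m) (haf _) (haf _) (hqq m) (ha _) hrel
    exact h
  -- last term identity
  have keyn : t n / (qp q q (n - n) * qp q a (n + n))
      = α n / (qp q q (n - n) * qp q (a * q) (n + n)) := by
    have e1 : n - n = 0 := by omega
    have e2 : n + n = 2 * n := by omega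
    rw [e1, e2, hZ (2 * n), show qp q q 0 = 1 from Finset.prod_range_zero _]
    simp only [ht]
    exact aux_last (1 - a) (α n) (1 - a * q ^ (2 * n)) (qp q a (2 * n))
      ha1 (haf _) (ha _)
  -- split the primed sum
  have hsplit : ∑ j ∈ Finset.range (n + 1), α' j / (qp q q (n - j) * qp q a (n + j))
      = (∑ j ∈ Finset.range (n + 1), t j / (qp q q (n - j) * qp q a (n + j)))
        - ∑ j ∈ Finset.range n,
            a * q ^ (2 * j) * t j / (qp q q (n - (j + 1)) * qp q a (n + (j + 1))) := by
    rw [Finset.sum_range_succ' (fun j => α' j / (qp q q (n - j) * qp q a (n + j))) n,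
      Finset.sum_range_succ' (fun j => t j / (qp q q (n - j) * qp q a (n + j))) n]
    have h0 : α' 0 = t 0 := by
      rw [hα'0]
      simp only [ht]
      rw [mul_zero, pow_zero, mul_one, mul_comm, mul_div_assoc, div_self ha1, mul_one]
    have hstep : ∀ j : ℕ, α' (j + 1) = t (j + 1) - a * q ^ (2 * j) * t j := by
      intro j
      rw [hα' j]
      simp only [ht]
      ring
    have hterm : ∀ j : ℕ, α' (j + 1) / (qp q q (n - (j + 1)) * qp q a (n + (j + 1)))
        = t (j + 1) / (qp q q (n - (j + 1)) * qp q a (n + (j + 1)))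
          - a * q ^ (2 * j) * t j / (qp q q (n - (j + 1)) * qp q a (n + (j + 1))) := by
      intro j
      rw [hstep j, sub_div]
    simp only [hterm, h0]
    rw [Finset.sum_sub_distrib]
    ring
  have h2 : ∑ j ∈ Finset.range (n + 1), t j / (qp q q (n - j) * qp q a (n + j))
      = (∑ j ∈ Finset.range n,
          (α j / (qp q q (n - j) * qp q (a * q) (n + j))
            + a * q ^ (2 * j) * t j / (qp q q (n - (j + 1)) * qp q a (n + (j + 1)))))
        + α n / (qp q q (n - n) * qp q (a * q) (n + n)) := by
    rw [Finset.sum_range_succ, keyn]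
    exact congrArg (· + α n / (qp q q (n - n) * qp q (a * q) (n + n)))
      (Finset.sum_congr rfl key)
  rw [hsplit, h2, Finset.sum_add_distrib,
    Finset.sum_range_succ (fun j => α j / (qp q q (n - j) * qp q (a * q) (n + j))) n]
  ring
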